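/- Circle-chord identity (equation (A.2) in the proof that the level-set distance is locally geodesic): for every a, b ∈ [0, π/2] there exists λ ∈ [0, 1] such that √(λ² + 1 − 2λ·cos a) + √(λ² + 1 − 2λ·cos b) = √(2 − 2·cos(a+b)). -/

import Mathlib

set_option maxHeartbeats 1000000


/-- Circle-chord identity: for every `a, b ∈ [0, π/2]` there exists `λ ∈ [0,1]` with
`√(λ²+1−2λ cos a) + √(λ²+1−2λ cos b) = √(2−2 cos(a+b))`. -/
theorem circle_chord_identity (a b : ℝ)
    (ha : a ∈ Set.Icc (0 : ℝ) (Real.pi / 2))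
    (hb : b ∈ Set.Icc (0 : ℝ) (Real.pi / 2)) :
    ∃ l ∈ Set.Icc (0 : ℝ) 1,
      Real.sqrt (l ^ 2 + 1 - 2 * l * Real.cos a)
        + Real.sqrt (l ^ 2 + 1 - 2 * l * Real.cos b)
        = Real.sqrt (2 - 2 * Real.cos (a + b)) := by
  obtain ⟨ha0, ha2⟩ := ha
  obtain ⟨hb0, hb2⟩ := hb
  have hpi := Real.pi_pos
  set sa := Real.sin (a/2) with hsa
  set ca := Real.cos (a/2) with hca
  set sb := Real.sin (b/2) with hsb
  set cb := Real.cos (b/2) with hcb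
  have hp1 : sa ^ 2 + ca ^ 2 = 1 := Real.sin_sq_add_cos_sq _
  have hp2 : sb ^ 2 + cb ^ 2 = 1 := Real.sin_sq_add_cos_sq _
  have hsa0 : 0 ≤ sa := Real.sin_nonneg_of_nonneg_of_le_pi (by linarith) (by linarith)
  have hsb0 : 0 ≤ sb := Real.sin_nonneg_of_nonneg_of_le_pi (by linarith) (by linarith)
  have hca0 : 0 ≤ ca := Real.cos_nonneg_of_mem_Icc ⟨by linarith, by linarith⟩
  have hcb0 : 0 ≤ cb := Real.cos_nonneg_of_mem_Icc ⟨by linarith, by linarith⟩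
  have hcapos : 0 < ca := Real.cos_pos_of_mem_Ioo ⟨by linarith, by linarith⟩
  have hcbpos : 0 < cb := Real.cos_pos_of_mem_Ioo ⟨by linarith, by linarith⟩
  have hcosa : Real.cos a = ca ^ 2 - sa ^ 2 := by
    rw [show a = a/2 + a/2 by ring, Real.cos_add]; ring
  have hsina : Real.sin a = 2 * sa * ca := by
    rw [show a = a/2 + a/2 by ring, Real.sin_add]; ring
  have hcosb : Real.cos b = cb ^ 2 - sb ^ 2 := by
    rw [show b = b/2 + b/2 by ring, Real.cos_add]; ring
  have hsinb : Real.sin b = 2 * sb * cb := by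
    rw [show b = b/2 + b/2 by ring, Real.sin_add]; ring
  have hcosS : Real.cos ((a+b)/2) = ca * cb - sa * sb := by
    rw [show (a+b)/2 = a/2 + b/2 by ring, Real.cos_add]
  have hsinS : Real.sin ((a+b)/2) = sa * cb + ca * sb := by
    rw [show (a+b)/2 = a/2 + b/2 by ring, Real.sin_add]
  have hcosAB : Real.cos (a+b) = (ca*cb - sa*sb)^2 - (sa*cb + ca*sb)^2 := by
    rw [show a + b = (a+b)/2 + (a+b)/2 by ring, Real.cos_add, hcosS, hsinS]; ring
  have hcdpos : (0:ℝ) < ca * cb + sa * sb := by positivity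
  have hcs0 : (0:ℝ) ≤ ca * cb - sa * sb := by
    rw [← hcosS]
    exact Real.cos_nonneg_of_mem_Icc ⟨by linarith, by linarith⟩
  refine ⟨(ca * cb - sa * sb) / (ca * cb + sa * sb), ⟨by positivity, ?_⟩, ?_⟩
  · rw [div_le_one hcdpos]; nlinarith
  · have keyA : (ca*cb - sa*sb)^2 + (ca*cb + sa*sb)^2
        - 2*(ca*cb - sa*sb)*(ca*cb + sa*sb)*(ca^2 - sa^2) = (2*sa*ca)^2 := by
      linear_combination (-2*(ca^2*cb^2 + sa^2*sb^2)) * hp1 + (4*sa^2*ca^2) * hp2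
    have keyB : (ca*cb - sa*sb)^2 + (ca*cb + sa*sb)^2
        - 2*(ca*cb - sa*sb)*(ca*cb + sa*sb)*(cb^2 - sb^2) = (2*sb*cb)^2 := by
      linear_combination (4*sb^2*cb^2) * hp1 + (-2*(ca^2*cb^2 + sa^2*sb^2)) * hp2
    have hA : ((ca*cb-sa*sb)/(ca*cb+sa*sb)) ^ 2 + 1
        - 2 * ((ca*cb-sa*sb)/(ca*cb+sa*sb)) * Real.cos a
        = (Real.sin a / (ca*cb+sa*sb)) ^ 2 := by
      rw [hcosa, hsina]
      rw [show ((ca*cb-sa*sb)/(ca*cb+sa*sb)) ^ 2 + 1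
          - 2 * ((ca*cb-sa*sb)/(ca*cb+sa*sb)) * (ca^2 - sa^2)
          = ((ca*cb - sa*sb)^2 + (ca*cb + sa*sb)^2
            - 2*(ca*cb - sa*sb)*(ca*cb + sa*sb)*(ca^2 - sa^2)) / (ca*cb+sa*sb)^2 by
        field_simp]
      rw [keyA, div_pow]
    have hB : ((ca*cb-sa*sb)/(ca*cb+sa*sb)) ^ 2 + 1
        - 2 * ((ca*cb-sa*sb)/(ca*cb+sa*sb)) * Real.cos b
        = (Real.sin b / (ca*cb+sa*sb)) ^ 2 := by
      rw [hcosb, hsinb]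
      rw [show ((ca*cb-sa*sb)/(ca*cb+sa*sb)) ^ 2 + 1
          - 2 * ((ca*cb-sa*sb)/(ca*cb+sa*sb)) * (cb^2 - sb^2)
          = ((ca*cb - sa*sb)^2 + (ca*cb + sa*sb)^2
            - 2*(ca*cb - sa*sb)*(ca*cb + sa*sb)*(cb^2 - sb^2)) / (ca*cb+sa*sb)^2 by
        field_simp]
      rw [keyB, div_pow]
    have hR : 2 - 2 * Real.cos (a+b) = (2 * Real.sin ((a+b)/2)) ^ 2 := by
      rw [hcosAB, hsinS]
      linear_combination (-2*(sb^2+cb^2)) * hp1 + (-2) * hp2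
    have hsinA0 : 0 ≤ Real.sin a := by
      rw [hsina]; nlinarith [mul_nonneg hsa0 hca0]
    have hsinB0 : 0 ≤ Real.sin b := by
      rw [hsinb]; nlinarith [mul_nonneg hsb0 hcb0]
    have hsinS0 : 0 ≤ Real.sin ((a+b)/2) := by
      rw [hsinS]; nlinarith [mul_nonneg hsa0 hcb0, mul_nonneg hca0 hsb0]
    rw [hA, hB, hR, Real.sqrt_sq (div_nonneg hsinA0 hcdpos.le),
      Real.sqrt_sq (div_nonneg hsinB0 hcdpos.le),
      Real.sqrt_sq (by linarith)]
    rw [hsina, hsinb, hsinS]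
    rw [← add_div, div_eq_iff (ne_of_gt hcdpos)]
    linear_combination (-2*sa*ca) * hp2 + (-2*sb*cb) * hp1
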